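/- arXiv:2601.17832 — 5 statements merged into one kernel-verified Lean document; each statement's English description precedes it below -/
import Mathlib

section
/- Let n, U, S be positive integers with n > 1, n ≤ U, σ(n) ≥ S, and suppose the smallest prime factor of n is the k-th prime 𝔭_k (primes indexed in increasing order: 𝔭_1 = 2, 𝔭_2 = 3, …). Then for every positive integer ℓ with ℓ ≥ ω(n), one has ∏_{i=1}^{ℓ} 𝔭_{k+i-1}/(𝔭_{k+i-1} - 1) ≥ S/U (as an inequality of rational numbers). -/
section Aux
open ArithmeticFunction ArithmeticFunction.sigma Finset

lemma ratio_one_le {p : ℕ} (hp : 2 ≤ p) : (1:ℚ) ≤ (p:ℚ)/((p:ℚ)-1) := by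
  have : (2:ℚ) ≤ p := by exact_mod_cast hp
  rw [le_div_iff₀ (by linarith)]; linarith

lemma ratio_anti {p q : ℕ} (hp : 2 ≤ p) (hpq : p ≤ q) :
    (q:ℚ)/((q:ℚ)-1) ≤ (p:ℚ)/((p:ℚ)-1) := by
  have h1 : (2:ℚ) ≤ p := by exact_mod_cast hp
  have h2 : (p:ℚ) ≤ q := by exact_mod_cast hpq
  rw [div_le_div_iff₀ (by linarith) (by linarith)]; nlinarith

lemma sigma_prime_pow_le {p a : ℕ} (hp : p.Prime) :
    (σ 1 (p ^ a) : ℚ) ≤ (p:ℚ)^a * ((p:ℚ)/((p:ℚ)-1)) := by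
  have h2 : (2:ℚ) ≤ p := by exact_mod_cast hp.two_le
  have hσ : (σ 1 (p ^ a) : ℚ) = ∑ i ∈ range (a+1), (p:ℚ)^i := by
    rw [sigma_one_apply, Nat.divisors_prime_pow hp, Finset.sum_map]
    push_cast; simp
  rw [hσ, mul_div_assoc', le_div_iff₀ (by linarith), ← sub_nonneg]
  have := geom_sum_mul (p:ℚ) (a+1)
  nlinarith [this, pow_nonneg (by linarith : (0:ℚ) ≤ p) (a+1), pow_succ (p:ℚ) a]

lemma prod_ratio_one_le {s : Finset ℕ} (hs : ∀ p ∈ s, p.Prime) :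
    (1:ℚ) ≤ ∏ p ∈ s, (p:ℚ)/((p:ℚ)-1) := by
  have h := Finset.prod_le_prod (f := fun _ : ℕ => (1:ℚ))
    (g := fun p : ℕ => (p:ℚ)/((p:ℚ)-1)) (s := s)
    (fun _ _ => zero_le_one) (fun p hp => ratio_one_le (hs p hp).two_le)
  simpa using h

lemma sigma_le_prod : ∀ n : ℕ, 0 < n →
    (σ 1 n : ℚ) ≤ (n:ℚ) * ∏ p ∈ n.primeFactors, (p:ℚ)/((p:ℚ)-1) := by
  intro n
  induction n using Nat.recOnPosPrimePosCoprime with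
  | prime_pow p a hp ha =>
    intro _
    rw [Nat.primeFactors_prime_pow ha.ne' hp, Finset.prod_singleton]
    push_cast
    exact sigma_prime_pow_le hp
  | zero => intro h; exact absurd h (lt_irrefl 0)
  | one => intro _; simp [sigma_one_apply]
  | coprime a b ha hb hab iha ihb =>
    intro _
    rw [isMultiplicative_sigma.map_mul_of_coprime hab,
      hab.primeFactors_mul, Finset.prod_union hab.disjoint_primeFactors]
    push_cast
    calc (σ 1 a : ℚ) * (σ 1 b : ℚ)
        ≤ ((a:ℚ) * ∏ p ∈ a.primeFactors, (p:ℚ)/((p:ℚ)-1)) *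
          ((b:ℚ) * ∏ p ∈ b.primeFactors, (p:ℚ)/((p:ℚ)-1)) := by
          apply mul_le_mul (iha (by omega)) (ihb (by omega)) (by positivity)
          have := prod_ratio_one_le (fun p hp => Nat.prime_of_mem_primeFactors hp) (s := a.primeFactors)
          positivity
      _ = (a:ℚ) * (b:ℚ) * ((∏ p ∈ a.primeFactors, (p:ℚ)/((p:ℚ)-1)) *
          ∏ p ∈ b.primeFactors, (p:ℚ)/((p:ℚ)-1)) := by ring


lemma nth_le_sorted_factor {n k : ℕ} (hn : 1 < n) (hk : n.minFac = Nat.nth Nat.Prime k)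
    (e : Fin n.primeFactors.card ≃o {x // x ∈ n.primeFactors}) :
    ∀ j (h : j < n.primeFactors.card),
      k + j ≤ Nat.count Nat.Prime ((e ⟨j, h⟩ : {x // x ∈ n.primeFactors}) : ℕ) := by
  intro j
  induction j with
  | zero =>
    intro h
    set q : ℕ := ((e ⟨0, h⟩ : {x // x ∈ n.primeFactors}) : ℕ) with hq
    have hqm : q ∈ n.primeFactors := (e ⟨0, h⟩).2
    have hle : Nat.nth Nat.Prime k ≤ q := by
      rw [← hk]
      exact Nat.minFac_le_of_dvd (Nat.prime_of_mem_primeFactors hqm).two_le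
        (Nat.dvd_of_mem_primeFactors hqm)
    have := Nat.count_monotone Nat.Prime hle
    rw [Nat.count_nth_of_infinite Nat.infinite_setOf_prime] at this
    omega
  | succ j ih =>
    intro h
    have hj : j < n.primeFactors.card := by omega
    have hlt : ((e ⟨j, hj⟩ : {x // x ∈ n.primeFactors}) : ℕ)
        < ((e ⟨j+1, h⟩ : {x // x ∈ n.primeFactors}) : ℕ) := by
      have : (⟨j, hj⟩ : Fin n.primeFactors.card) < ⟨j+1, h⟩ := by
        simp [Fin.lt_def]
      exact_mod_cast e.strictMono this
    have hp : Nat.Prime ((e ⟨j, hj⟩ : {x // x ∈ n.primeFactors}) : ℕ) :=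
      Nat.prime_of_mem_primeFactors (e ⟨j, hj⟩).2
    have hc := Nat.count_strict_mono hp hlt
    have := ih hj
    omega


end Aux


open ArithmeticFunction ArithmeticFunction.sigma in
/-- If `1 < n ≤ U`, `σ(n) ≥ S` (with `U, S` positive), and the smallest prime factor of `n`
is the `k`-th prime (here 0-indexed: `Nat.nth Nat.Prime 0 = 2`), then for every positive
`ℓ ≥ ω(n)`, the product `∏_{i=0}^{ℓ-1} 𝔭_{k+i}/(𝔭_{k+i}-1)` is at least `S/U` in `ℚ`. -/
theorem prod_consecutive_primes_ratio_ge_of_omega_le (n U S k : ℕ)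
    (hn : 1 < n) (hU : 0 < U) (hS0 : 0 < S) (hnU : n ≤ U) (hS : S ≤ σ 1 n)
    (hk : n.minFac = Nat.nth Nat.Prime k) :
    ∀ ℓ : ℕ, 0 < ℓ → n.primeFactors.card ≤ ℓ →
      (S : ℚ) / U ≤ ∏ i ∈ Finset.range ℓ,
        (Nat.nth Nat.Prime (k + i) : ℚ) / ((Nat.nth Nat.Prime (k + i) : ℚ) - 1) := by
  intro ℓ hℓ hcard
  have hn0 : (0:ℚ) < n := by exact_mod_cast Nat.lt_of_lt_of_le Nat.zero_lt_one hn.le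
  have hU0 : (0:ℚ) < U := by exact_mod_cast hU
  set e := Finset.orderIsoOfFin n.primeFactors rfl with he
  -- Step A: S/U ≤ σ(n)/n
  have stepA : (S:ℚ)/U ≤ (σ 1 n : ℚ)/(n:ℚ) := by
    rw [div_le_div_iff₀ hU0 hn0]
    have h1 : (S:ℚ) ≤ (σ 1 n : ℚ) := by exact_mod_cast hS
    have h2 : (n:ℚ) ≤ (U:ℚ) := by exact_mod_cast hnU
    have h3 : (0:ℚ) ≤ S := by positivity
    nlinarith
  -- Step B
  have stepB : (σ 1 n : ℚ)/(n:ℚ) ≤ ∏ p ∈ n.primeFactors, (p:ℚ)/((p:ℚ)-1) := by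
    rw [div_le_iff₀ hn0, mul_comm]
    exact sigma_le_prod n (by omega)
  -- Step C+D: product over factors ≤ product over nth primes (Fin m)
  have stepCD : (∏ p ∈ n.primeFactors, (p:ℚ)/((p:ℚ)-1)) ≤
      ∏ i ∈ Finset.range n.primeFactors.card,
        (Nat.nth Nat.Prime (k + i) : ℚ) / ((Nat.nth Nat.Prime (k + i) : ℚ) - 1) := by
    rw [← Finset.prod_coe_sort n.primeFactors (fun q => (q:ℚ)/((q:ℚ)-1)),
      ← Equiv.prod_comp e.toEquiv (fun x : {x // x ∈ n.primeFactors} => ((x:ℕ):ℚ)/(((x:ℕ):ℚ)-1)),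
      ← Fin.prod_univ_eq_prod_range
        (fun i => (Nat.nth Nat.Prime (k + i) : ℚ) / ((Nat.nth Nat.Prime (k + i) : ℚ) - 1))]
    apply Finset.prod_le_prod
    · intro i _
      have hp := Nat.prime_of_mem_primeFactors (e.toEquiv i).2
      have : (2:ℚ) ≤ ((e.toEquiv i : {x // x ∈ n.primeFactors}) : ℕ) := by exact_mod_cast hp.two_le
      exact div_nonneg (by linarith) (by linarith)
    · intro i _
      have hcount := nth_le_sorted_factor hn hk e i.1 i.2
      have hple : Nat.nth Nat.Prime (k + i.1) ≤ ((e i : {x // x ∈ n.primeFactors}) : ℕ) := by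
        have h1 : Nat.nth Nat.Prime (k + i.1) ≤
            Nat.nth Nat.Prime (Nat.count Nat.Prime ((e i : {x // x ∈ n.primeFactors}) : ℕ)) :=
          (Nat.nth_le_nth Nat.infinite_setOf_prime).mpr (by simpa using hcount)
        rwa [Nat.nth_count (Nat.prime_of_mem_primeFactors (e i).2)] at h1
      have := ratio_anti (Nat.prime_nth_prime (k + i.1)).two_le hple
      simpa using this
  -- Step E: extend range
  have stepE : (∏ i ∈ Finset.range n.primeFactors.card,
        (Nat.nth Nat.Prime (k + i) : ℚ) / ((Nat.nth Nat.Prime (k + i) : ℚ) - 1)) ≤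
      ∏ i ∈ Finset.range ℓ,
        (Nat.nth Nat.Prime (k + i) : ℚ) / ((Nat.nth Nat.Prime (k + i) : ℚ) - 1) := by
    have hsub : Finset.range n.primeFactors.card ⊆ Finset.range ℓ :=
      Finset.range_subset_range.mpr hcard
    rw [← Finset.prod_sdiff hsub]
    apply le_mul_of_one_le_left
    · apply Finset.prod_nonneg
      intro i _
      have : (2:ℚ) ≤ Nat.nth Nat.Prime (k + i) := by
        exact_mod_cast (Nat.prime_nth_prime (k + i)).two_le
      exact div_nonneg (by linarith) (by linarith)
    · have h := Finset.prod_le_prod (f := fun _ : ℕ => (1:ℚ))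
        (g := fun i : ℕ => (Nat.nth Nat.Prime (k + i) : ℚ) / ((Nat.nth Nat.Prime (k + i) : ℚ) - 1))
        (s := Finset.range ℓ \ Finset.range n.primeFactors.card)
        (fun _ _ => zero_le_one)
        (fun i _ => ratio_one_le (Nat.prime_nth_prime (k + i)).two_le)
      simpa using h
  exact le_trans (le_trans (le_trans stepA stepB) stepCD) stepE
end

section
/- Let a, b be integers with gcd(a, b) = 1, let p be a prime, and let k ≥ 2 be an integer such that a · σ(p^k) = b · p^k + a. Then ((a - b)·p + b) · p^(k-1) = a; in particular p^(k-1) divides a and the p-adic valuation of a equals k - 1. -/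
open ArithmeticFunction in
open scoped ArithmeticFunction.sigma in
/-- If `gcd(a,b) = 1`, `p` is prime, `k ≥ 2`, and `a * σ(p^k) = b * p^k + a`, then
`((a-b)*p + b) * p^(k-1) = a`; in particular `p^(k-1) ∣ a` and `ν_p(a) = k - 1`. -/
theorem sigma_prime_pow_eq_case_a_eq_c (a b : ℤ) (hab : Int.gcd a b = 1)
    (p : ℕ) (hp : p.Prime) (k : ℕ) (hk : 2 ≤ k)
    (h : a * (σ 1 (p ^ k) : ℤ) = b * (p : ℤ) ^ k + a) :
    ((a - b) * p + b) * (p : ℤ) ^ (k - 1) = a ∧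
      (p : ℤ) ^ (k - 1) ∣ a ∧ padicValInt p a = k - 1 := by
  haveI : Fact p.Prime := ⟨hp⟩
  obtain ⟨m, rfl⟩ : ∃ m, k = m + 2 := ⟨k - 2, by omega⟩
  have hp0 : (p : ℤ) ≠ 0 := by exact_mod_cast hp.ne_zero
  have hσ : ((σ 1 (p ^ (m + 2)) : ℕ) : ℤ) = ∑ i ∈ Finset.range (m + 3), (p : ℤ) ^ i := by
    rw [ArithmeticFunction.sigma_one_apply_prime_pow hp]
    push_cast
    rfl
  rw [hσ] at h
  have hgeom : (∑ i ∈ Finset.range (m + 3), (p : ℤ) ^ i) * ((p : ℤ) - 1) =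
      (p : ℤ) ^ (m + 3) - 1 := geom_sum_mul _ _
  have keyn : ((a - b) * p + b) * (p : ℤ) ^ (m + 1) = a := by
    have h2 := congrArg (· * ((p : ℤ) - 1)) h
    rw [mul_assoc, hgeom] at h2
    have hmul : (p : ℤ) * (((a - b) * p + b) * (p : ℤ) ^ (m + 1)) = (p : ℤ) * a := by
      linear_combination h2
    exact mul_left_cancel₀ hp0 hmul
  have key : ((a - b) * p + b) * (p : ℤ) ^ (m + 2 - 1) = a := keyn
  refine ⟨key, Dvd.intro_left _ keyn, ?_⟩
  have ha : a ≠ 0 := by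
    rintro rfl
    simp only [zero_mul, add_zero] at h
    rcases mul_eq_zero.mp h.symm with hb | hpp
    · rw [hb] at hab; simp at hab
    · exact absurd hpp (pow_ne_zero _ hp0)
  have hcop : IsCoprime a b := Int.isCoprime_iff_gcd_eq_one.mpr hab
  have hpa : (p : ℤ) ∣ a :=
    dvd_trans (dvd_pow_self (p : ℤ) (Nat.succ_ne_zero m)) (Dvd.intro_left _ keyn)
  have hpb : ¬ (p : ℤ) ∣ b := by
    intro hb
    have hu : IsUnit (p : ℤ) := hcop.isUnit_of_dvd' hpa hb
    rw [Int.isUnit_iff] at hu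
    have := hp.two_le
    rcases hu with h1 | h1 <;> omega
  have hpc : ¬ (p : ℤ) ∣ ((a - b) * p + b) := by
    intro hc
    apply hpb
    have := hc.sub (⟨a - b, by ring⟩ : (p : ℤ) ∣ (a - b) * p)
    simpa using this
  have hc0 : ((a - b) * p + b) ≠ 0 := by
    intro h0
    exact ha (by rw [← keyn, h0, zero_mul])
  have hval : padicValInt p a =
      padicValInt p ((a - b) * p + b) + padicValInt p ((p : ℤ) ^ (m + 1)) := by
    conv_lhs => rw [← keyn]
    exact padicValInt.mul hc0 (pow_ne_zero _ hp0)
  have hpow : padicValInt p ((p : ℤ) ^ (m + 1)) = m + 1 := by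
    rw [show ((p : ℤ) ^ (m + 1)) = ((p ^ (m + 1) : ℕ) : ℤ) by push_cast; ring,
      padicValInt.of_nat, padicValNat.prime_pow]
  rw [hval, padicValInt.eq_zero_of_not_dvd hpc, zero_add, hpow]
  omega
end

section
/- Let a, b, c be integers with a ≠ b and a² = (a - b)(a - c), and let p, q be distinct primes satisfying a · σ(p·q) = b·p·q + c. Then (a - b)·p + a = 0 or (a - b)·q + a = 0; in particular b - a divides a and p = a/(b - a) or q = a/(b - a). -/
open ArithmeticFunction ArithmeticFunction.sigma in
/-- Degenerate case `B² - AC = 0` of the two-prime shortcut: if `a ≠ b`,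
`a² = (a-b)*(a-c)`, and distinct primes `p, q` satisfy `a * σ(p*q) = b*p*q + c`, then
`(a-b)*p + a = 0` or `(a-b)*q + a = 0`; in particular `b - a` divides `a` and
`p = a/(b-a)` or `q = a/(b-a)`. -/
theorem sigma_mul_two_primes_degenerate (a b c : ℤ) (hab : a ≠ b)
    (hdeg : a ^ 2 = (a - b) * (a - c)) (p q : ℕ) (hp : p.Prime) (hq : q.Prime)
    (hpq : p ≠ q) (h : a * (σ 1 (p * q) : ℤ) = b * (p * q : ℕ) + c) :
    ((a - b) * p + a = 0 ∨ (a - b) * q + a = 0) ∧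
      (b - a) ∣ a ∧ ((p : ℤ) = a / (b - a) ∨ (q : ℤ) = a / (b - a)) := by
  have hco : Nat.Coprime p q := (Nat.coprime_primes hp hq).mpr hpq
  have hσ : (σ 1 (p * q) : ℕ) = (p + 1) * (q + 1) := by
    rw [isMultiplicative_sigma.map_mul_of_coprime hco, sigma_one_apply, sigma_one_apply,
      hp.divisors, hq.divisors]
    simp [Finset.sum_pair hp.ne_one.symm, Finset.sum_pair hq.ne_one.symm]
    ring
  have h' : a * ((p : ℤ) + 1) * ((q : ℤ) + 1) = b * p * q + c := by
    rw [hσ] at h; push_cast at h; linarith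
  have key : ((a - b) * p + a) * ((a - b) * q + a) = 0 := by
    linear_combination (a - b) * h' + hdeg
  have hne : (b - a : ℤ) ≠ 0 := sub_ne_zero.mpr (Ne.symm hab)
  rcases mul_eq_zero.mp key with hz | hz
  · refine ⟨Or.inl hz, ⟨p, by linarith⟩, Or.inl ?_⟩
    have h2 : a = (p : ℤ) * (b - a) := by linarith
    have h3 := Int.mul_ediv_cancel ((p:ℤ)) hne
    rw [← h2] at h3
    exact h3.symm
  · refine ⟨Or.inr hz, ⟨q, by linarith⟩, Or.inr ?_⟩
    have h2 : a = (q : ℤ) * (b - a) := by linarith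
    have h3 := Int.mul_ediv_cancel ((q:ℤ)) hne
    rw [← h2] at h3
    exact h3.symm
end

section
/- Let a, b, c be integers and let n be a positive integer that is a perfect square and satisfies a · σ(n) = b·n + c. Let p be a prime with t := ν_p(n) ≥ 1, and let q be a prime dividing σ(p^t). Then -b·c is a square modulo q, i.e., there exists an integer x with x² ≡ -b·c (mod q). -/
open ArithmeticFunction ArithmeticFunction.sigma in
/-- If `n` is a positive perfect square with `a * σ(n) = b*n + c`, `p` is a prime with
`t := ν_p(n) ≥ 1`, and `q` is a prime dividing `σ(p^t)`, then `-b*c` is a square mod `q`. -/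
theorem neg_mul_sq_residue_of_square_solution (a b c : ℤ) (n : ℕ) (hn : 0 < n)
    (hsq : IsSquare n) (h : a * (σ 1 n : ℤ) = b * n + c)
    (p : ℕ) (hp : p.Prime) (ht : 1 ≤ n.factorization p)
    (q : ℕ) (hq : q.Prime) (hqdvd : q ∣ σ 1 (p ^ n.factorization p)) :
    ∃ x : ℤ, x ^ 2 ≡ -(b * c) [ZMOD q] := by
  obtain ⟨m, hm⟩ := hsq
  have hsplit : σ 1 n = σ 1 (p ^ n.factorization p) * σ 1 (n / p ^ n.factorization p) := by
    conv_lhs => rw [← Nat.ordProj_mul_ordCompl_eq_self n p]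
    exact (ArithmeticFunction.isMultiplicative_sigma.map_mul_of_coprime
      ((Nat.coprime_ordCompl hp hn.ne').pow_left _))
  have hqs : (q : ℤ) ∣ (σ 1 n : ℤ) := by
    rw [hsplit]
    exact_mod_cast (hqdvd.mul_right _).natCast (α := ℤ)
  have h0 : (((σ 1 n : ℕ) : ℤ) : ZMod q) = 0 :=
    (ZMod.intCast_zmod_eq_zero_iff_dvd _ _).mpr hqs
  refine ⟨b * m, (ZMod.intCast_eq_intCast_iff _ _ _).mp ?_⟩
  have hbc : (b : ZMod q) * (n : ℕ) + (c : ZMod q) = 0 := by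
    have := congrArg (fun z : ℤ => (z : ZMod q)) h
    simp only [Int.cast_add, Int.cast_mul] at this
    rw [h0, mul_zero] at this
    push_cast at this ⊢
    linear_combination -this
  have hnm : ((n : ℕ) : ZMod q) = (m : ZMod q) * (m : ZMod q) := by
    rw [hm]; push_cast; ring
  push_cast
  push_cast at hbc hnm
  linear_combination (b : ZMod q) * hbc - (b : ZMod q)^2 * hnm
end

section
/- There is no even positive integer n satisfying σ(n) = 2n + 1; consequently every positive integer n with σ(n) = 2n + 1 is an odd perfect square. -/
open ArithmeticFunction ArithmeticFunction.sigma

lemma geom_two_sum (n : ℕ) : ∑ k ∈ Finset.range n, 2 ^ k = 2 ^ n - 1 := by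
  induction n with
  | zero => simp
  | succ n ih =>
    rw [Finset.sum_range_succ, ih]
    have : 1 ≤ 2 ^ n := Nat.one_le_two_pow
    have : (2:ℕ) ^ (n+1) = 2 * 2 ^ n := by ring
    omega

lemma odd_of_dvd' {d n : ℕ} (hn : Odd n) (h : d ∣ n) : Odd d := by
  rcases Nat.even_or_odd d with he | ho
  · have hev : Even n := (even_iff_two_dvd).mpr (he.two_dvd.trans h)
    exact absurd hn (Nat.not_odd_iff_even.mpr hev)
  · exact ho

lemma sigma_two_pow (a : ℕ) : σ 1 (2 ^ a) = 2 ^ (a + 1) - 1 := by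
  rw [sigma_one_apply_prime_pow Nat.prime_two, geom_two_sum]

lemma sigma_prime_pow_mod_two {p k : ℕ} (hp : p.Prime) (hpo : Odd p) :
    σ 1 (p ^ k) % 2 = (k + 1) % 2 := by
  rw [sigma_one_apply_prime_pow hp, Finset.sum_nat_mod]
  have : ∀ i ∈ Finset.range (k + 1), p ^ i % 2 = 1 := fun i _ =>
    Nat.odd_iff.mp (hpo.pow)
  rw [Finset.sum_congr rfl this]
  simp

/-- If `m` is odd and `σ 1 m` is odd, then `m` is a square. -/
lemma isSquare_of_odd_sigma {m : ℕ} (hm : 0 < m) (hmo : Odd m) (hs : Odd (σ 1 m)) :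
    IsSquare m := by
  have hm0 : m ≠ 0 := hm.ne'
  -- every exponent in the factorization of m is even
  have heven : ∀ p ∈ m.primeFactors, Even (m.factorization p) := by
    intro p hp
    have hpp : p.Prime := Nat.prime_of_mem_primeFactors hp
    have hpd : p ∣ m := Nat.dvd_of_mem_primeFactors hp
    have hpo : Odd p := odd_of_dvd' hmo hpd
    -- σ 1 (p ^ k) divides σ 1 m
    have hfac : σ 1 m = m.factorization.prod fun q k => σ 1 (q ^ k) :=
      isMultiplicative_sigma.multiplicative_factorization _ hm0
    have hdvd : σ 1 (p ^ m.factorization p) ∣ σ 1 m := by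
      rw [hfac]
      exact Finset.dvd_prod_of_mem _ (by
        rwa [Nat.support_factorization])
    have hods : Odd (σ 1 (p ^ m.factorization p)) := odd_of_dvd' hs hdvd
    have := sigma_prime_pow_mod_two (k := m.factorization p) hpp hpo
    rw [Nat.odd_iff] at hods
    rw [this] at hods
    rw [Nat.even_iff]
    omega
  refine ⟨m.factorization.prod fun p k => p ^ (k / 2), ?_⟩
  conv_lhs => rw [← Nat.factorization_prod_pow_eq_self hm0]
  rw [Finsupp.prod, Finsupp.prod, ← Finset.prod_mul_distrib]
  refine Finset.prod_congr rfl fun p hp => ?_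
  obtain ⟨c, hc⟩ := heven p (by rwa [← Nat.support_factorization])
  rw [← pow_add]
  congr 1
  omega

lemma odd_prime_mod_four {p : ℕ} (hp : p.Prime) (hpo : p % 2 = 1) :
    p % 4 = 1 ∨ p % 4 = 3 := by
  have := Nat.mod_mod_of_dvd p (by norm_num : (2:ℕ) ∣ 4)
  omega

/-- Any natural number `≡ 3 mod 4` has a prime factor `≡ 3 mod 4`. -/
lemma exists_prime_mod_four_eq_three : ∀ q : ℕ, q % 4 = 3 →
    ∃ p : ℕ, p.Prime ∧ p ∣ q ∧ p % 4 = 3 := by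
  intro q
  induction q using Nat.strong_induction_on with
  | _ q ih =>
    intro hq
    have hq1 : q ≠ 1 := by omega
    have hq0 : 0 < q := by omega
    have hp : q.minFac.Prime := Nat.minFac_prime hq1
    have hpd : q.minFac ∣ q := Nat.minFac_dvd q
    by_cases h3 : q.minFac % 4 = 3
    · exact ⟨q.minFac, hp, hpd, h3⟩
    · have hqodd : q % 2 = 1 := by omega
      have hpne2 : q.minFac ≠ 2 := by
        rintro h2
        have : (2:ℕ) ∣ q := h2 ▸ hpd
        omega
      have hpodd : q.minFac % 2 = 1 := Nat.odd_iff.mp (hp.odd_of_ne_two hpne2)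
      have hp1 : q.minFac % 4 = 1 := by
        rcases odd_prime_mod_four hp hpodd with h | h
        · exact h
        · exact absurd h h3
      obtain ⟨r, hr⟩ := hpd
      have hr0 : 0 < r := by
        rcases Nat.eq_zero_or_pos r with h | h
        · subst h; simp at hr; omega
        · exact h
      have hrlt : r < q := by
        have h2 : 2 ≤ q.minFac := hp.two_le
        calc r < 2 * r := by omega
          _ ≤ q.minFac * r := Nat.mul_le_mul_right r h2
          _ = q := hr.symm
      have hr4 : r % 4 = 3 := by
        have := Nat.mul_mod q.minFac r 4
        rw [← hr, hp1] at this
        omega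
      obtain ⟨p, hpp, hpd', h3'⟩ := ih r hrlt hr4
      have hrq : r ∣ q := Dvd.intro_left _ hr.symm
      exact ⟨p, hpp, hpd'.trans hrq, h3'⟩

/-- There is no even quasiperfect number. -/
lemma no_even_quasiperfect {n : ℕ} (hn : 0 < n) (hne : Even n)
    (hσ : σ 1 n = 2 * n + 1) : False := by
  have hn0 : n ≠ 0 := hn.ne'
  set a := n.factorization 2 with ha
  set m := n / 2 ^ a with hm
  have h2n : 2 ∣ n := hne.two_dvd
  have ha1 : 1 ≤ a := (Nat.Prime.factorization_pos_of_dvd Nat.prime_two hn0 h2n)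
  have hnm : 2 ^ a * m = n := Nat.ordProj_mul_ordCompl_eq_self n 2
  have hm0 : 0 < m := Nat.ordCompl_pos 2 hn0
  have hmodd2 : ¬ 2 ∣ m := Nat.not_dvd_ordCompl Nat.prime_two hn0
  have hmodd : Odd m := Nat.odd_iff.mpr (by omega)
  have hcop : Nat.Coprime (2 ^ a) m :=
    Nat.Coprime.pow_left a (Nat.coprime_ordCompl Nat.prime_two hn0)
  have hmul : σ 1 n = σ 1 (2 ^ a) * σ 1 m := by
    rw [← hnm]
    exact (isMultiplicative_sigma.map_mul_of_coprime hcop)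
  rw [sigma_two_pow] at hmul
  -- σ 1 m is odd
  have hodd_total : Odd (σ 1 n) := by rw [hσ]; exact ⟨n, by ring⟩
  have hoddm : Odd (σ 1 m) := by
    rw [hmul] at hodd_total
    exact odd_of_dvd' hodd_total (Dvd.intro_left _ rfl)
  obtain ⟨s, hs⟩ := isSquare_of_odd_sigma hm0 hmodd hoddm
  -- q = 2^(a+1) - 1 divides s^2 + 1
  set q := 2 ^ (a + 1) - 1 with hqdef
  have hq4 : q % 4 = 3 := by
    have h4 : (4:ℕ) ∣ 2 ^ (a + 1) := by
      have : 2 ^ (a + 1) = 4 * 2 ^ (a - 1) := by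
        rw [show (4:ℕ) = 2 ^ 2 by norm_num, ← pow_add]
        congr 1
        omega
      exact ⟨2 ^ (a - 1), this⟩
    have h1 : 1 ≤ 2 ^ (a + 1) := Nat.one_le_two_pow
    obtain ⟨c, hc⟩ := h4
    have hc1 : 1 ≤ c := by
      rcases Nat.eq_zero_or_pos c with h | h
      · subst h; omega
      · exact h
    simp only [hqdef, hc]
    omega
  have hqdvd : q ∣ 2 * n + 1 := ⟨σ 1 m, by rw [← hσ, hmul]⟩
  have hkey : q ∣ s * s + 1 := by
    have h2n1 : 2 * n + 1 = q * (s * s) + (s * s + 1) := by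
      have h1 : 1 ≤ 2 ^ (a + 1) := Nat.one_le_two_pow
      have : 2 * n = 2 ^ (a + 1) * (s * s) := by
        rw [← hnm, hs]
        ring
      simp only [hqdef]
      rw [this]
      have : 2 ^ (a+1) * (s*s) = (2^(a+1) - 1) * (s*s) + s*s := by
        rw [Nat.sub_mul]
        have : s * s ≤ 2 ^ (a+1) * (s * s) := Nat.le_mul_of_pos_left _ (by positivity)
        omega
      omega
    have := hqdvd
    rw [h2n1] at this
    exact (Nat.dvd_add_right (Dvd.intro _ rfl)).mp this
  obtain ⟨p, hpp, hpq, hp3⟩ := exists_prime_mod_four_eq_three q hq4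
  have hps : p ∣ s * s + 1 := hpq.trans hkey
  have hsq : IsSquare (-1 : ZMod (s * s + 1)) := by
    refine ⟨(s : ZMod (s * s + 1)), ?_⟩
    have : ((s * s + 1 : ℕ) : ZMod (s * s + 1)) = 0 := ZMod.natCast_self _
    push_cast at this
    linear_combination -this
  exact (Nat.mod_four_ne_three_of_mem_primeFactors_of_isSquare_neg_one (Nat.mem_primeFactors.mpr ⟨hpp, hps, by omega⟩) hsq) hp3

open ArithmeticFunction ArithmeticFunction.sigma in
/-- No even positive integer `n` satisfies `σ(n) = 2n + 1`; consequently every positive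
integer `n` with `σ(n) = 2n + 1` (a quasiperfect number) is an odd perfect square. -/
theorem quasiperfect_not_even_and_odd_square :
    (¬ ∃ n : ℕ, 0 < n ∧ Even n ∧ σ 1 n = 2 * n + 1) ∧
      ∀ n : ℕ, 0 < n → σ 1 n = 2 * n + 1 → Odd n ∧ IsSquare n := by
  constructor
  · rintro ⟨n, hn, hne, hσ⟩
    exact no_even_quasiperfect hn hne hσ
  · intro n hn hσ
    have hodd : Odd n := by
      rw [← Nat.not_even_iff_odd]
      intro hne
      exact no_even_quasiperfect hn hne hσ
    refine ⟨hodd, isSquare_of_odd_sigma hn hodd ?_⟩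
    rw [hσ]
    exact ⟨n, by ring⟩
end
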